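/- Let λ : (0,∞) → ℝ be continuous with λ(ρ) ≥ α > -1 for ρ ∈ [r,∞) and with 1/(ρ(λ(ρ)+1)) = O(ρ^{-2k-1}) as ρ → ∞ for some integer k ≥ 1. Fix T > 0, c > 0 and r > 0. Let R : [0,T') → (0,∞) be the maximal solution of R'(t) = (c/(2(T-t)))·(λ(R(t)) + 1)·R(t), R(0) = r. Then R is strictly increasing, T' < T, R(t) → ∞ as t → T', and there is C > 0 with R(t)^{2k} ≤ C/(T'-t) for t close to T'. -/

import Mathlib

set_option maxHeartbeats 1000000

open Filter Asymptotics Set MeasureTheory intervalIntegral Topology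

namespace Stmt10Aux

variable {lam : ℝ → ℝ} {r α : ℝ}

/-- The extended integrand `ρ ↦ 1/(ρ(λρ+1))`, extended constantly below `r`. -/
noncomputable def gg (lam : ℝ → ℝ) (r : ℝ) : ℝ → ℝ :=
  fun ρ => 1 / (max ρ r * (lam (max ρ r) + 1))

theorem gg_pos' (hα : -1 < α) (hbound : ∀ ρ, r ≤ ρ → α ≤ lam ρ) (hr : 0 < r) (ρ : ℝ) :
    0 < max ρ r * (lam (max ρ r) + 1) := by
  have h1 : 0 < max ρ r := lt_of_lt_of_le hr (le_max_right _ _)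
  have h2 : 0 < lam (max ρ r) + 1 := by
    have := hbound _ (le_max_right ρ r); linarith
  exact mul_pos h1 h2

theorem gg_cont (hcont : ContinuousOn lam (Set.Ioi 0))
    (hα : -1 < α) (hbound : ∀ ρ, r ≤ ρ → α ≤ lam ρ) (hr : 0 < r) :
    Continuous (gg lam r) := by
  have hmax : Continuous fun ρ : ℝ => max ρ r := continuous_id.max continuous_const
  have hmem : ∀ ρ : ℝ, max ρ r ∈ Set.Ioi (0:ℝ) := fun ρ => lt_of_lt_of_le hr (le_max_right _ _)
  have hlam : Continuous fun ρ : ℝ => lam (max ρ r) :=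
    hcont.comp_continuous hmax hmem
  exact Continuous.div continuous_const (hmax.mul (hlam.add continuous_const))
    (fun ρ => (gg_pos' hα hbound hr ρ).ne')

theorem gg_pos (hα : -1 < α) (hbound : ∀ ρ, r ≤ ρ → α ≤ lam ρ) (hr : 0 < r) (ρ : ℝ) :
    0 < gg lam r ρ := by
  have h1 : 0 < max ρ r := lt_of_lt_of_le hr (le_max_right _ _)
  exact div_pos one_pos (gg_pos' hα hbound hr ρ)

theorem gg_eq (hρ : r ≤ ρ) : gg lam r ρ = 1 / (ρ * (lam ρ + 1)) := by
  rw [gg, max_eq_left hρ]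


theorem exists_tail_bound {k : ℕ}
    (hO : (fun ρ => 1 / (ρ * (lam ρ + 1))) =O[atTop] fun ρ => (ρ ^ (2 * k + 1))⁻¹)
    (hα : -1 < α) (hbound : ∀ ρ, r ≤ ρ → α ≤ lam ρ) (hr : 0 < r) :
    ∃ C > (0:ℝ), ∃ a : ℝ, max r 1 ≤ a ∧
      ∀ ρ, a ≤ ρ → gg lam r ρ ≤ C * ρ ^ (-((2*k+1 : ℕ) : ℝ)) := by
  obtain ⟨C, hC, hCw⟩ := hO.exists_pos
  rw [IsBigOWith, eventually_atTop] at hCw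
  obtain ⟨a₀, ha₀⟩ := hCw
  refine ⟨C, hC, max a₀ (max r 1), le_max_right _ _, fun ρ hρ => ?_⟩
  have hρ1 : (1:ℝ) ≤ ρ := le_trans (le_trans (le_max_right r 1) (le_max_right a₀ _)) hρ
  have hρ0 : (0:ℝ) < ρ := lt_of_lt_of_le one_pos hρ1
  have hρr : r ≤ ρ := le_trans (le_trans (le_max_left r 1) (le_max_right a₀ _)) hρ
  have h1 := ha₀ ρ (le_trans (le_max_left _ _) hρ)
  rw [Real.norm_eq_abs, Real.norm_eq_abs] at h1
  have e1 : gg lam r ρ = 1 / (ρ * (lam ρ + 1)) := gg_eq hρr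
  have e2 : ρ ^ (-((2*k+1 : ℕ) : ℝ)) = (ρ ^ (2*k+1))⁻¹ := by
    rw [Real.rpow_neg hρ0.le, Real.rpow_natCast]
  rw [e1, e2]
  calc 1 / (ρ * (lam ρ + 1)) ≤ |1 / (ρ * (lam ρ + 1))| := le_abs_self _
    _ ≤ C * |(ρ ^ (2*k+1))⁻¹| := h1
    _ = C * (ρ ^ (2*k+1))⁻¹ := by
        rw [abs_of_nonneg (by positivity)]

theorem integrableOn_tail {k : ℕ} (hk : 1 ≤ k) {a C : ℝ} (ha : max r 1 ≤ a) (hC : 0 < C)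
    (hb : ∀ ρ, a ≤ ρ → gg lam r ρ ≤ C * ρ ^ (-((2*k+1 : ℕ) : ℝ)))
    (hcont : ContinuousOn lam (Set.Ioi 0))
    (hα : -1 < α) (hbound : ∀ ρ, r ≤ ρ → α ≤ lam ρ) (hr : 0 < r) :
    IntegrableOn (gg lam r) (Set.Ioi r) := by
  have ha0 : (0:ℝ) < a := lt_of_lt_of_le one_pos (le_trans (le_max_right r 1) ha)
  have har : r ≤ a := le_trans (le_max_left r 1) ha
  have hexp : (-((2*k+1 : ℕ) : ℝ)) < -1 := by
    have : (1:ℝ) ≤ (k:ℝ) := by exact_mod_cast hk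
    push_cast
    linarith
  have hint : IntegrableOn (fun ρ : ℝ => C * ρ ^ (-((2*k+1 : ℕ) : ℝ))) (Set.Ioi a) :=
    (integrableOn_Ioi_rpow_of_lt hexp ha0).const_mul C
  have hcg : Continuous (gg lam r) := gg_cont hcont hα hbound hr
  have h1 : IntegrableOn (gg lam r) (Set.Ioi a) := by
    refine Integrable.mono' hint hcg.aestronglyMeasurable.restrict ?_
    rw [ae_restrict_iff' measurableSet_Ioi]
    filter_upwards with ρ hρ
    rw [Real.norm_eq_abs, abs_of_nonneg (gg_pos hα hbound hr ρ).le]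
    exact hb ρ (le_of_lt hρ)
  have h2 : IntegrableOn (gg lam r) (Set.Ioc r a) :=
    (hcg.integrableOn_Icc).mono_set Set.Ioc_subset_Icc_self
  have := h2.union h1
  rwa [Set.Ioc_union_Ioi_eq_Ioi har] at this

/-- Antiderivative of `gg`. -/
noncomputable def G (lam : ℝ → ℝ) (r : ℝ) : ℝ → ℝ := fun ρ => ∫ σ in r..ρ, gg lam r σ

/-- Total mass of `gg` on `(r,∞)`. -/
noncomputable def M (lam : ℝ → ℝ) (r : ℝ) : ℝ := ∫ σ in Set.Ioi r, gg lam r σ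

theorem G_r : G lam r r = 0 := intervalIntegral.integral_same

theorem G_below {x : ℝ} (hx : x ≤ r) : G lam r x = (x - r) * gg lam r r := by
  have hcongr : ∀ σ ∈ Set.uIcc r x, gg lam r σ = gg lam r r := by
    intro σ hσ
    rw [Set.uIcc_of_ge hx] at hσ
    simp only [gg, max_eq_right hσ.2, max_self]
  rw [G, intervalIntegral.integral_congr hcongr, intervalIntegral.integral_const, smul_eq_mul]

variable (hcont : ContinuousOn lam (Set.Ioi 0))
  (hα : -1 < α) (hbound : ∀ ρ, r ≤ ρ → α ≤ lam ρ) (hr : 0 < r)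

section

include hcont hα hbound hr

theorem hasDerivAt_G (ρ : ℝ) : HasDerivAt (G lam r) (gg lam r ρ) ρ := by
  have hcg : Continuous (gg lam r) := gg_cont hcont hα hbound hr
  exact intervalIntegral.integral_hasDerivAt_right (hcg.intervalIntegrable _ _)
    hcg.aestronglyMeasurable.stronglyMeasurableAtFilter hcg.continuousAt

theorem strictMono_G : StrictMono (G lam r) :=
  strictMono_of_deriv_pos fun x => by
    rw [(hasDerivAt_G hcont hα hbound hr x).deriv]
    exact gg_pos hα hbound hr x

theorem continuous_G : Continuous (G lam r) := by
  have : Differentiable ℝ (G lam r) :=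
    fun x => (hasDerivAt_G hcont hα hbound hr x).differentiableAt
  exact this.continuous

theorem tendsto_G (hI : IntegrableOn (gg lam r) (Set.Ioi r)) :
    Tendsto (G lam r) atTop (𝓝 (M lam r)) :=
  MeasureTheory.intervalIntegral_tendsto_integral_Ioi r hI tendsto_id

theorem G_le_M (hI : IntegrableOn (gg lam r) (Set.Ioi r)) (ρ : ℝ) : G lam r ρ ≤ M lam r :=
  Monotone.ge_of_tendsto (strictMono_G hcont hα hbound hr).monotone
    (tendsto_G hcont hα hbound hr hI) ρ

theorem G_lt_M (hI : IntegrableOn (gg lam r) (Set.Ioi r)) (ρ : ℝ) : G lam r ρ < M lam r :=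
  lt_of_lt_of_le (strictMono_G hcont hα hbound hr (lt_add_one ρ))
    (G_le_M hcont hα hbound hr hI (ρ + 1))

theorem M_pos (hI : IntegrableOn (gg lam r) (Set.Ioi r)) : 0 < M lam r := by
  have h0 : G lam r r = 0 := G_r
  have := G_lt_M hcont hα hbound hr hI r
  linarith

theorem G_surjOn (hI : IntegrableOn (gg lam r) (Set.Ioi r)) {y : ℝ} (hy : y < M lam r) :
    ∃ ρ, G lam r ρ = y := by
  -- find a point where G ≤ y
  have hggr : 0 < gg lam r r := gg_pos hα hbound hr r
  have hlow : ∃ x, G lam r x ≤ y := by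
    rcases le_or_gt 0 y with h | h
    · exact ⟨r, by rw [G_r]; exact h⟩
    · refine ⟨r + y / gg lam r r, ?_⟩
      rw [G_below (by nlinarith [div_neg_of_neg_of_pos h hggr])]
      rw [add_sub_cancel_left, div_mul_cancel₀ _ hggr.ne']
  obtain ⟨x, hx⟩ := hlow
  -- find a point where G > y
  have hhigh : ∃ b, x ≤ b ∧ y ≤ G lam r b := by
    have := (tendsto_G hcont hα hbound hr hI).eventually (eventually_ge_nhds hy)
    obtain ⟨b₀, hb₀⟩ := (this.and (eventually_ge_atTop x)).exists
    exact ⟨b₀, hb₀.2, hb₀.1⟩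
  obtain ⟨b, hxb, hb⟩ := hhigh
  have hiv := intermediate_value_Icc hxb ((continuous_G hcont hα hbound hr).continuousOn)
  obtain ⟨ρ, _, hρ⟩ := hiv ⟨hx, hb⟩
  exact ⟨ρ, hρ⟩

/-- Inverse of `G`. -/
noncomputable def Ginv (lam : ℝ → ℝ) (r : ℝ) : ℝ → ℝ := Function.invFun (G lam r)

theorem Ginv_G (x : ℝ) : Ginv lam r (G lam r x) = x :=
  Function.leftInverse_invFun (strictMono_G hcont hα hbound hr).injective x

theorem G_Ginv (hI : IntegrableOn (gg lam r) (Set.Ioi r)) {y : ℝ} (hy : y < M lam r) :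
    G lam r (Ginv lam r y) = y :=
  Function.invFun_eq (G_surjOn hcont hα hbound hr hI hy)

theorem Ginv_lt {x y : ℝ} (hI : IntegrableOn (gg lam r) (Set.Ioi r))
    (hy : y < M lam r) (h : G lam r x < y) : x < Ginv lam r y := by
  by_contra hcon
  push_neg at hcon
  have := (strictMono_G hcont hα hbound hr).monotone hcon
  rw [G_Ginv hcont hα hbound hr hI hy] at this
  linarith

theorem lt_Ginv {x y : ℝ} (hI : IntegrableOn (gg lam r) (Set.Ioi r))
    (hy : y < M lam r) (h : y < G lam r x) : Ginv lam r y < x := by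
  by_contra hcon
  push_neg at hcon
  have := (strictMono_G hcont hα hbound hr).monotone hcon
  rw [G_Ginv hcont hα hbound hr hI hy] at this
  linarith

theorem continuousAt_Ginv (hI : IntegrableOn (gg lam r) (Set.Ioi r))
    {y₀ : ℝ} (hy₀ : y₀ < M lam r) : ContinuousAt (Ginv lam r) y₀ := by
  rw [Metric.continuousAt_iff]
  intro ε hε
  set x₀ := Ginv lam r y₀ with hx₀
  have hGx₀ : G lam r x₀ = y₀ := G_Ginv hcont hα hbound hr hI hy₀
  have h1 : G lam r (x₀ - ε/2) < y₀ := by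
    rw [← hGx₀]; exact strictMono_G hcont hα hbound hr (by linarith)
  have h2 : y₀ < G lam r (x₀ + ε/2) := by
    rw [← hGx₀]; exact strictMono_G hcont hα hbound hr (by linarith)
  refine ⟨min (min (y₀ - G lam r (x₀ - ε/2)) (G lam r (x₀ + ε/2) - y₀)) (M lam r - y₀),
    by refine lt_min (lt_min ?_ ?_) ?_ <;> linarith, fun {y} hy => ?_⟩
  rw [Real.dist_eq, abs_lt] at hy
  obtain ⟨hya, hyb⟩ := hy
  have hyM : y < M lam r := by
    have := lt_of_lt_of_le hyb (le_trans (min_le_right _ _) le_rfl)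
    linarith [min_le_right (min (y₀ - G lam r (x₀ - ε/2)) (G lam r (x₀ + ε/2) - y₀)) (M lam r - y₀)]
  have hy1 : G lam r (x₀ - ε/2) < y := by
    have h := min_le_left (min (y₀ - G lam r (x₀ - ε/2)) (G lam r (x₀ + ε/2) - y₀)) (M lam r - y₀)
    have h' := min_le_left (y₀ - G lam r (x₀ - ε/2)) (G lam r (x₀ + ε/2) - y₀)
    linarith
  have hy2 : y < G lam r (x₀ + ε/2) := by
    have h := min_le_left (min (y₀ - G lam r (x₀ - ε/2)) (G lam r (x₀ + ε/2) - y₀)) (M lam r - y₀)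
    have h' := min_le_right (y₀ - G lam r (x₀ - ε/2)) (G lam r (x₀ + ε/2) - y₀)
    linarith
  have ha := Ginv_lt hcont hα hbound hr hI hyM hy1
  have hb := lt_Ginv hcont hα hbound hr hI hyM hy2
  rw [Real.dist_eq, abs_lt]
  constructor <;> [linarith; linarith]

theorem hasDerivAt_Ginv (hI : IntegrableOn (gg lam r) (Set.Ioi r))
    {y : ℝ} (hy : y < M lam r) :
    HasDerivAt (Ginv lam r) (gg lam r (Ginv lam r y))⁻¹ y := by
  refine HasDerivAt.of_local_left_inverse (continuousAt_Ginv hcont hα hbound hr hI hy)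
    (hasDerivAt_G hcont hα hbound hr _) (gg_pos hα hbound hr _).ne' ?_
  have hopen : Set.Iio (M lam r) ∈ 𝓝 y := Iio_mem_nhds hy
  filter_upwards [hopen] with z hz
  exact G_Ginv hcont hα hbound hr hI hz

theorem M_sub_G (hI : IntegrableOn (gg lam r) (Set.Ioi r)) {ρ : ℝ} (hρ : r ≤ ρ) :
    M lam r - G lam r ρ = ∫ σ in Set.Ioi ρ, gg lam r σ := by
  have hcg : Continuous (gg lam r) := gg_cont hcont hα hbound hr
  have heq : ∀ b : ℝ, G lam r b - G lam r ρ = ∫ σ in ρ..b, gg lam r σ := by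
    intro b
    have := intervalIntegral.integral_add_adjacent_intervals
      (hcg.intervalIntegrable r ρ : IntervalIntegrable _ MeasureTheory.volume _ _)
      (hcg.intervalIntegrable ρ b : IntervalIntegrable _ MeasureTheory.volume _ _)
    simp only [G]
    linarith
  have l1 : Tendsto (fun b => G lam r b - G lam r ρ) atTop (𝓝 (M lam r - G lam r ρ)) :=
    (tendsto_G hcont hα hbound hr hI).sub_const _
  have l2 : Tendsto (fun b => G lam r b - G lam r ρ) atTop
      (𝓝 (∫ σ in Set.Ioi ρ, gg lam r σ)) := by
    have := MeasureTheory.intervalIntegral_tendsto_integral_Ioi ρ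
      (hI.mono_set (Set.Ioi_subset_Ioi hρ)) tendsto_id
    simpa only [← heq, id_eq] using this
  exact tendsto_nhds_unique l1 l2

theorem tail_bound {k : ℕ} (hk : 1 ≤ k) {a C : ℝ} (ha : max r 1 ≤ a) (hC : 0 < C)
    (hb : ∀ ρ, a ≤ ρ → gg lam r ρ ≤ C * ρ ^ (-((2*k+1 : ℕ) : ℝ)))
    (hI : IntegrableOn (gg lam r) (Set.Ioi r)) {ρ : ℝ} (hρ : a ≤ ρ) :
    ∫ σ in Set.Ioi ρ, gg lam r σ ≤ C / (2*k) * ρ ^ (-((2*k : ℕ) : ℝ)) := by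
  have hρ0 : (0:ℝ) < ρ := lt_of_lt_of_le one_pos (le_trans (le_max_right r 1) (le_trans ha hρ))
  have hk' : (1:ℝ) ≤ (k:ℝ) := by exact_mod_cast hk
  have hexp : (-((2*k+1 : ℕ) : ℝ)) < -1 := by push_cast; linarith
  have hint : IntegrableOn (fun σ : ℝ => C * σ ^ (-((2*k+1 : ℕ) : ℝ))) (Set.Ioi ρ) :=
    (integrableOn_Ioi_rpow_of_lt hexp hρ0).const_mul C
  have hIρ : IntegrableOn (gg lam r) (Set.Ioi ρ) :=
    hI.mono_set (Set.Ioi_subset_Ioi (le_trans (le_max_left r 1) (le_trans ha hρ)))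
  have hmono := MeasureTheory.setIntegral_mono_on hIρ hint measurableSet_Ioi
    (fun σ hσ => hb σ (le_of_lt (lt_of_le_of_lt hρ hσ)))
  refine le_trans hmono ?_
  rw [MeasureTheory.integral_const_mul, integral_Ioi_rpow_of_lt hexp hρ0]
  have he : (-((2*k+1 : ℕ) : ℝ)) + 1 = -((2*k : ℕ) : ℝ) := by push_cast; ring
  rw [he]
  have hk0 : ((2*k : ℕ) : ℝ) ≠ 0 := by positivity
  rw [neg_div_neg_eq, div_mul_eq_mul_div, mul_div_assoc]
  push_cast
  exact le_rfl

end

/-- The right-hand side antiderivative `t ↦ (c/2)(log T - log (T-t))`. -/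
noncomputable def HH (T c : ℝ) : ℝ → ℝ := fun t => c / 2 * (Real.log T - Real.log (T - t))

theorem HH_zero (T c : ℝ) : HH T c 0 = 0 := by simp [HH]

theorem hasDerivAt_HH {T c t : ℝ} (ht : t < T) :
    HasDerivAt (HH T c) (c / (2 * (T - t))) t := by
  have h0 : T - t ≠ 0 := ne_of_gt (sub_pos.2 ht)
  have h1 : HasDerivAt (fun s : ℝ => T - s) (-1) t := by
    simpa using (hasDerivAt_id t).const_sub T
  have h2 : HasDerivAt (fun s : ℝ => Real.log (T - s)) ((T - t)⁻¹ * (-1)) t :=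
    (Real.hasDerivAt_log h0).comp t h1
  have h3 : HasDerivAt (fun s : ℝ => Real.log T - Real.log (T - s))
      (0 - (T - t)⁻¹ * (-1)) t := (hasDerivAt_const t _).sub h2
  have h4 := h3.const_mul (c / 2)
  rw [show c / (2 * (T - t)) = c / 2 * (0 - (T - t)⁻¹ * (-1)) by rw [div_eq_mul_inv, mul_inv]; ring]
  exact h4

end Stmt10Aux


open Filter Asymptotics

/-- If `λ ≥ α > -1` on `[r,∞)` and `1/(ρ(λ(ρ)+1)) = O(ρ^{-2k-1})`
as `ρ → ∞`, then the maximal solution of `R' = (c/(2(T-t)))(λ(R)+1)R`,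
`R(0) = r`, is strictly increasing, `T' < T`, `R(t) → ∞` as `t → T'`, and
`R(t)^{2k} ≤ C/(T'-t)` near `T'`. -/
theorem stmt10 (lam : ℝ → ℝ) (hcont : ContinuousOn lam (Set.Ioi 0))
    (k : ℕ) (hk : 1 ≤ k) (α : ℝ) (hα : -1 < α)
    (T c r : ℝ) (hT : 0 < T) (hc : 0 < c) (hr : 0 < r)
    (hbound : ∀ ρ, r ≤ ρ → α ≤ lam ρ)
    (hO : (fun ρ => 1 / (ρ * (lam ρ + 1))) =O[atTop] fun ρ => (ρ ^ (2 * k + 1))⁻¹)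
    (T' : ℝ) (hT'0 : 0 < T') (hT'T : T' ≤ T)
    (R : ℝ → ℝ) (hR0 : R 0 = r)
    (hRpos : ∀ t ∈ Set.Ico (0 : ℝ) T', 0 < R t)
    (hRode : ∀ t ∈ Set.Ico (0 : ℝ) T',
      HasDerivAt R (c / (2 * (T - t)) * (lam (R t) + 1) * R t) t)
    (hmax : ∀ (S : ℝ → ℝ) (T₂ : ℝ), T' < T₂ → T₂ ≤ T → S 0 = r →
      (∀ t ∈ Set.Ico (0 : ℝ) T₂, 0 < S t ∧
        HasDerivAt S (c / (2 * (T - t)) * (lam (S t) + 1) * S t) t) → False) :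
    StrictMonoOn R (Set.Ico 0 T')
    ∧ T' < T
    ∧ Tendsto R (nhdsWithin T' (Set.Iio T')) atTop
    ∧ ∃ C > (0 : ℝ), ∃ t₀ ∈ Set.Ico (0 : ℝ) T',
        ∀ t ∈ Set.Ico t₀ T', (R t) ^ (2 * k) ≤ C / (T' - t) := by
  classical
  obtain ⟨C₀, hC₀, a, ha, hbnd⟩ := Stmt10Aux.exists_tail_bound hO hα hbound hr
  have hI : MeasureTheory.IntegrableOn (Stmt10Aux.gg lam r) (Set.Ioi r) :=
    Stmt10Aux.integrableOn_tail hk ha hC₀ hbnd hcont hα hbound hr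
  -- Step A : R stays ≥ r
  have hge : ∀ t ∈ Set.Ico (0 : ℝ) T', r ≤ R t := by
    by_contra hcon
    push_neg at hcon
    obtain ⟨t₁, ht₁, hRt₁⟩ := hcon
    set B := {t | t ∈ Set.Ico (0:ℝ) T' ∧ R t < r} with hBdef
    have hBne : B.Nonempty := ⟨t₁, ht₁, hRt₁⟩
    have hBbdd : BddBelow B := ⟨0, fun t ht => ht.1.1⟩
    set t₀ := sInf B with ht₀def
    have ht₀0 : 0 ≤ t₀ := le_csInf hBne fun t ht => ht.1.1
    have ht₀T' : t₀ < T' := lt_of_le_of_lt (csInf_le hBbdd ⟨ht₁, hRt₁⟩) ht₁.2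
    have ht₀mem : t₀ ∈ Set.Ico (0:ℝ) T' := ⟨ht₀0, ht₀T'⟩
    have hcontR : ContinuousAt R t₀ := (hRode t₀ ht₀mem).continuousAt
    have hnear : ∀ δ : ℝ, 0 < δ → ∃ s ∈ B, t₀ ≤ s ∧ s - t₀ < δ := by
      intro δ hδ
      obtain ⟨s, hsB, hs⟩ := (csInf_lt_iff hBbdd hBne).1 (by linarith : sInf B < t₀ + δ)
      exact ⟨s, hsB, csInf_le hBbdd hsB, by linarith⟩
    have hlow : ∀ t, 0 ≤ t → t < t₀ → r ≤ R t := by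
      intro t h0 hlt
      by_contra hcc
      push_neg at hcc
      exact absurd (csInf_le hBbdd ⟨⟨h0, lt_trans hlt ht₀T'⟩, hcc⟩) (not_le.2 hlt)
    have hRt₀ : r ≤ R t₀ := by
      rcases eq_or_lt_of_le ht₀0 with h | h
      · rw [← h, hR0]
      · haveI : (nhdsWithin t₀ (Set.Ioo 0 t₀)).NeBot := right_nhdsWithin_Ioo_neBot h
        have htd : Tendsto R (nhdsWithin t₀ (Set.Ioo 0 t₀)) (nhds (R t₀)) :=
          hcontR.continuousWithinAt
        refine ge_of_tendsto htd ?_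
        filter_upwards [self_mem_nhdsWithin] with t ht using hlow t ht.1.le ht.2
    rcases eq_or_lt_of_le hRt₀ with hEq | hGt
    · -- R t₀ = r : derivative positive pushes R above r just after t₀
      have hderiv := hRode t₀ ht₀mem
      have hTt₀ : 0 < T - t₀ := by linarith [lt_of_lt_of_le ht₀T' hT'T]
      have hlam : 0 < lam (R t₀) + 1 := by
        have := hbound (R t₀) hEq.le; linarith
      have hpos : 0 < c / (2 * (T - t₀)) * (lam (R t₀) + 1) * R t₀ :=
        mul_pos (mul_pos (div_pos hc (by linarith)) hlam) (hRpos t₀ ht₀mem)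
      have hslope := hasDerivAt_iff_tendsto_slope.1 hderiv
      have hev : ∀ᶠ s in nhdsWithin t₀ {t₀}ᶜ, 0 < slope R t₀ s :=
        hslope.eventually (eventually_gt_nhds hpos)
      rw [eventually_nhdsWithin_iff] at hev
      rw [Metric.eventually_nhds_iff] at hev
      obtain ⟨δ, hδ, hδev⟩ := hev
      obtain ⟨s, hsB, hst₀, hsδ⟩ := hnear δ hδ
      have hsne : s ≠ t₀ := by
        intro hcc
        rw [hcc] at hsB
        exact absurd hsB.2 (not_lt.2 hEq.le)
      have hst₀' : t₀ < s := lt_of_le_of_ne hst₀ (Ne.symm hsne)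
      have hds : dist s t₀ < δ := by
        rw [Real.dist_eq, abs_of_nonneg (by linarith)]; linarith
      have hsl := hδev hds hsne
      rw [slope_def_field] at hsl
      have : 0 < R s - R t₀ := by
        have h1 : 0 < s - t₀ := by linarith
        have := mul_pos hsl h1
        rw [div_mul_cancel₀] at this
        · linarith
        · exact ne_of_gt h1
      have : r < R s := by rw [← hEq] at this; linarith
      exact absurd hsB.2 (not_lt.2 this.le)
    · -- R t₀ > r : continuity contradicts the infimum property
      have hev : ∀ᶠ s in nhds t₀, r < R s := hcontR.eventually (eventually_gt_nhds hGt)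
      rw [Metric.eventually_nhds_iff] at hev
      obtain ⟨δ, hδ, hδev⟩ := hev
      obtain ⟨s, hsB, hst₀, hsδ⟩ := hnear δ hδ
      have hds : dist s t₀ < δ := by
        rw [Real.dist_eq, abs_of_nonneg (by linarith)]; linarith
      exact absurd hsB.2 (not_lt.2 (hδev hds).le)
  -- Step B : strict monotonicity
  have mono : StrictMonoOn R (Set.Ico 0 T') := by
    apply strictMonoOn_of_deriv_pos (convex_Ico 0 T')
    · exact fun x hx => (hRode x hx).continuousAt.continuousWithinAt
    · intro x hx
      rw [interior_Ico] at hx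
      have hx' : x ∈ Set.Ico (0:ℝ) T' := ⟨hx.1.le, hx.2⟩
      rw [(hRode x hx').deriv]
      have h1 : 0 < T - x := by linarith [hx.2, hT'T]
      have h2 : 0 < lam (R x) + 1 := by have := hbound _ (hge x hx'); linarith
      exact mul_pos (mul_pos (div_pos hc (by linarith)) h2) (hRpos x hx')
  -- Step C : the key conservation law
  have key : ∀ t ∈ Set.Ico (0 : ℝ) T',
      Stmt10Aux.G lam r (R t) = Stmt10Aux.HH T c t := by
    intro t ht
    rcases eq_or_lt_of_le ht.1 with h0 | h0
    · rw [← h0, hR0, Stmt10Aux.G_r, Stmt10Aux.HH_zero]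
    · have hmemIco : ∀ x ∈ Set.Icc (0:ℝ) t, x ∈ Set.Ico (0:ℝ) T' :=
        fun x hx => ⟨hx.1, lt_of_le_of_lt hx.2 ht.2⟩
      have derivf : ∀ x ∈ Set.Ico (0:ℝ) t,
          HasDerivWithinAt (fun s => Stmt10Aux.G lam r (R s)) (c / (2 * (T - x)))
            (Set.Ici x) x := by
        intro x hx
        have hx' : x ∈ Set.Ico (0:ℝ) T' := ⟨hx.1, lt_trans hx.2 ht.2⟩
        have hd := (Stmt10Aux.hasDerivAt_G hcont hα hbound hr (R x)).comp x (hRode x hx')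
        have hRx := hRpos x hx'
        have hlamx : 0 < lam (R x) + 1 := by have := hbound _ (hge x hx'); linarith
        have hTx : 0 < T - x := by linarith [hx'.2, hT'T]
        have heq : Stmt10Aux.gg lam r (R x) * (c / (2 * (T - x)) * (lam (R x) + 1) * R x)
            = c / (2 * (T - x)) := by
          rw [Stmt10Aux.gg_eq (hge x hx')]
          field_simp
        rw [heq] at hd
        exact hd.hasDerivWithinAt
      have derivg : ∀ x ∈ Set.Ico (0:ℝ) t,
          HasDerivWithinAt (Stmt10Aux.HH T c) (c / (2 * (T - x))) (Set.Ici x) x := by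
        intro x hx
        have hxT : x < T := by
          have := lt_trans hx.2 ht.2; linarith [hT'T]
        exact (Stmt10Aux.hasDerivAt_HH hxT).hasDerivWithinAt
      have fcont : ContinuousOn (fun s => Stmt10Aux.G lam r (R s)) (Set.Icc 0 t) := by
        intro x hx
        exact (((Stmt10Aux.hasDerivAt_G hcont hα hbound hr (R x)).comp x
          (hRode x (hmemIco x hx))).continuousAt).continuousWithinAt
      have gcont : ContinuousOn (Stmt10Aux.HH T c) (Set.Icc 0 t) := by
        intro x hx
        have hxT : x < T := by
          have := (hmemIco x hx).2; linarith [hT'T]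
        exact (Stmt10Aux.hasDerivAt_HH hxT).continuousAt.continuousWithinAt
      have hinit : Stmt10Aux.G lam r (R 0) = Stmt10Aux.HH T c 0 := by
        rw [hR0, Stmt10Aux.G_r, Stmt10Aux.HH_zero]
      exact eq_of_has_deriv_right_eq derivf derivg fcont gcont hinit t
        (Set.right_mem_Icc.2 h0.le)
  set M := Stmt10Aux.M lam r with hMdef
  have hM : 0 < M := Stmt10Aux.M_pos hcont hα hbound hr hI
  set Ts := T - T * Real.exp (-(2 * M / c)) with hTsdef
  have hexp1 : Real.exp (-(2 * M / c)) < 1 := by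
    rw [Real.exp_lt_one_iff]
    have : 0 < 2 * M / c := by positivity
    linarith
  have hexp0 : 0 < Real.exp (-(2 * M / c)) := Real.exp_pos _
  have hTsT : Ts < T := by rw [hTsdef]; nlinarith
  have hTs0 : 0 < Ts := by rw [hTsdef]; nlinarith
  -- characterization of H t < M
  have hlogTs : Real.log (T - Ts) = Real.log T - 2 * M / c := by
    rw [show T - Ts = T * Real.exp (-(2 * M / c)) by rw [hTsdef]; ring,
      Real.log_mul hT.ne' (Real.exp_ne_zero _), Real.log_exp]
    ring
  have hHTs : Stmt10Aux.HH T c Ts = M := by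
    simp only [Stmt10Aux.HH]
    rw [hlogTs]
    field_simp
    ring
  have hHmono : StrictMonoOn (Stmt10Aux.HH T c) (Set.Iio T) := by
    intro x hx y hy hxy
    simp only [Stmt10Aux.HH]
    have hlog : Real.log (T - y) < Real.log (T - x) := by
      apply Real.log_lt_log
      · exact sub_pos.2 hy
      · linarith
    have hc2 : (0:ℝ) < c / 2 := by linarith
    nlinarith
  have hHlt : ∀ t : ℝ, t < T → (Stmt10Aux.HH T c t < M ↔ t < Ts) := by
    intro t ht
    constructor
    · intro h
      by_contra hcc
      push_neg at hcc
      rcases eq_or_lt_of_le hcc with he | hl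
      · rw [← he, hHTs] at h; exact lt_irrefl M h
      · have h2 := hHmono (Set.mem_Iio.2 hTsT) (Set.mem_Iio.2 ht) hl
        rw [hHTs] at h2
        exact absurd h (not_lt.2 h2.le)
    · intro h
      have := hHmono (Set.mem_Iio.2 ht) (Set.mem_Iio.2 hTsT) h
      rw [hHTs] at this
      exact this
  -- Step D : T' ≤ Ts
  have hT'Ts : T' ≤ Ts := by
    by_contra hcon
    push_neg at hcon
    have hTsmem : Ts ∈ Set.Ico (0:ℝ) T' := ⟨hTs0.le, hcon⟩
    have h1 := key Ts hTsmem
    have h2 : Stmt10Aux.G lam r (R Ts) < M := Stmt10Aux.G_lt_M hcont hα hbound hr hI _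
    rw [h1] at h2
    exact absurd ((hHlt Ts hTsT).1 h2) (lt_irrefl Ts)
  have hT'ltT : T' < T := lt_of_le_of_lt hT'Ts hTsT
  -- Step E : T' = Ts via maximality
  have hT'eq : T' = Ts := by
    rcases eq_or_lt_of_le hT'Ts with he | hl
    · exact he
    · exfalso
      apply hmax (fun t => Stmt10Aux.Ginv lam r (Stmt10Aux.HH T c t)) Ts hl hTsT.le
      · rw [Stmt10Aux.HH_zero, ← Stmt10Aux.G_r (lam := lam) (r := r),
          Stmt10Aux.Ginv_G hcont hα hbound hr]
      · intro t ht
        have htT : t < T := lt_of_lt_of_le ht.2 hTsT.le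
        have hHtM : Stmt10Aux.HH T c t < M := (hHlt t htT).2 ht.2
        have hHt0 : 0 ≤ Stmt10Aux.HH T c t := by
          simp only [Stmt10Aux.HH]
          have hlog : Real.log (T - t) ≤ Real.log T :=
            Real.log_le_log (by linarith) (by linarith [ht.1])
          nlinarith
        set S := Stmt10Aux.Ginv lam r (Stmt10Aux.HH T c t) with hSdef
        have hGS : Stmt10Aux.G lam r S = Stmt10Aux.HH T c t :=
          Stmt10Aux.G_Ginv hcont hα hbound hr hI hHtM
        have hSr : r ≤ S := by
          by_contra hcc
          push_neg at hcc
          have := Stmt10Aux.strictMono_G hcont hα hbound hr hcc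
          rw [hGS, Stmt10Aux.G_r] at this
          linarith
        refine ⟨lt_of_lt_of_le hr hSr, ?_⟩
        have h1 := Stmt10Aux.hasDerivAt_Ginv hcont hα hbound hr hI hHtM
        have h2 := Stmt10Aux.hasDerivAt_HH (T := T) (c := c) htT
        have h3 := h1.comp t h2
        have heq : (Stmt10Aux.gg lam r (Stmt10Aux.Ginv lam r (Stmt10Aux.HH T c t)))⁻¹
            * (c / (2 * (T - t))) = c / (2 * (T - t)) * (lam S + 1) * S := by
          rw [← hSdef, Stmt10Aux.gg_eq hSr]
          have hS0 : (0:ℝ) < S := lt_of_lt_of_le hr hSr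
          have hlamS : 0 < lam S + 1 := by have := hbound S hSr; linarith
          field_simp
        rw [heq] at h3
        exact h3
  -- Step F : blow up
  have hHT'M : Stmt10Aux.HH T c T' = M := by rw [hT'eq]; exact hHTs
  have hblow : Tendsto R (nhdsWithin T' (Set.Iio T')) atTop := by
    rw [tendsto_atTop]
    intro b
    set ρ₀ := max b r with hρ₀def
    have hGρ₀ : Stmt10Aux.G lam r ρ₀ < M := Stmt10Aux.G_lt_M hcont hα hbound hr hI _
    have hGρ₀' : Stmt10Aux.G lam r ρ₀ < Stmt10Aux.HH T c T' := by rw [hHT'M]; exact hGρ₀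
    have hHcont : ContinuousAt (Stmt10Aux.HH T c) T' :=
      (Stmt10Aux.hasDerivAt_HH (T := T) (c := c) hT'ltT).continuousAt
    have hev : ∀ᶠ t in nhds T', Stmt10Aux.G lam r ρ₀ < Stmt10Aux.HH T c t :=
      hHcont.eventually (eventually_gt_nhds hGρ₀')
    have hev2 : ∀ᶠ t in nhds T', (0:ℝ) < t := eventually_gt_nhds hT'0
    filter_upwards [(hev.and hev2).filter_mono nhdsWithin_le_nhds,
      self_mem_nhdsWithin] with t htt htIio
    have htmem : t ∈ Set.Ico (0:ℝ) T' := ⟨htt.2.le, htIio⟩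
    have hG1 : Stmt10Aux.G lam r ρ₀ < Stmt10Aux.G lam r (R t) := by
      rw [key t htmem]; exact htt.1
    have hlt : ρ₀ < R t := (Stmt10Aux.strictMono_G hcont hα hbound hr).lt_iff_lt.1 hG1
    have := le_max_left b r
    linarith
  refine ⟨mono, hT'ltT, hblow, ?_⟩
  -- Step G : the rate
  have hevRa : {t : ℝ | a ≤ R t} ∈ nhdsWithin T' (Set.Iio T') :=
    hblow.eventually (eventually_ge_atTop a)
  obtain ⟨u, hu, hsub⟩ := mem_nhdsLT_iff_exists_Ioo_subset.1 hevRa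
  obtain ⟨t₀, ht₀⟩ := exists_between (show max u 0 < T' from max_lt hu hT'0)
  have hk0 : (0:ℝ) < (k:ℝ) := by exact_mod_cast hk
  set K := C₀ / (2 * (k:ℝ)) with hKdef
  have hK : 0 < K := by positivity
  refine ⟨2 * T / c * K, by positivity, t₀,
    ⟨(le_max_right u 0).trans ht₀.1.le, ht₀.2⟩, ?_⟩
  intro t ht
  have ht0 : (0:ℝ) ≤ t := le_trans ((le_max_right u 0).trans ht₀.1.le) ht.1
  have htmem : t ∈ Set.Ico (0:ℝ) T' := ⟨ht0, ht.2⟩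
  have hut : u < t := lt_of_lt_of_le (lt_of_le_of_lt (le_max_left u 0) ht₀.1) ht.1
  have hta : a ≤ R t := hsub ⟨hut, ht.2⟩
  have hRt : 0 < R t := hRpos t htmem
  have hTt : 0 < T - t := by linarith [ht.2, hT'ltT]
  have hTT' : 0 < T - T' := sub_pos.2 hT'ltT
  have hT't : 0 < T' - t := sub_pos.2 ht.2
  -- upper bound on M - H t
  have h1 : M - Stmt10Aux.HH T c t = ∫ σ in Set.Ioi (R t), Stmt10Aux.gg lam r σ := by
    rw [← key t htmem]
    exact Stmt10Aux.M_sub_G hcont hα hbound hr hI (hge t htmem)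
  have h2 := Stmt10Aux.tail_bound hcont hα hbound hr hk ha hC₀ hbnd hI hta
  have hrpow : (R t : ℝ) ^ (-((2*k : ℕ) : ℝ)) = ((R t) ^ (2*k))⁻¹ := by
    rw [Real.rpow_neg hRt.le, Real.rpow_natCast]
  have h4 : M - Stmt10Aux.HH T c t ≤ K * ((R t) ^ (2*k))⁻¹ := by
    rw [h1, hKdef]
    calc (∫ σ in Set.Ioi (R t), Stmt10Aux.gg lam r σ)
        ≤ C₀ / (2*k) * (R t) ^ (-((2*k : ℕ) : ℝ)) := h2
      _ = C₀ / (2 * (k:ℝ)) * ((R t) ^ (2*k))⁻¹ := by rw [hrpow]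
  -- lower bound on M - H t
  have hlog1 : Real.log (T - T') - Real.log (T - t) ≤ (t - T') / (T - t) := by
    have hq : (0:ℝ) < (T - T') / (T - t) := div_pos hTT' hTt
    have h5 := Real.log_le_sub_one_of_pos hq
    rw [Real.log_div hTT'.ne' hTt.ne'] at h5
    have heq : (T - T') / (T - t) - 1 = (t - T') / (T - t) := by
      field_simp
      ring
    linarith
  have hMH : M - Stmt10Aux.HH T c t
      = c / 2 * (Real.log (T - t) - Real.log (T - T')) := by
    rw [← hHT'M]
    simp only [Stmt10Aux.HH]
    ring
  have hd : (T' - t) / T ≤ (T' - t) / (T - t) := by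
    apply div_le_div_of_nonneg_left hT't.le hTt
    linarith
  have h3 : c / (2 * T) * (T' - t) ≤ M - Stmt10Aux.HH T c t := by
    rw [hMH]
    have hL : (T' - t) / T ≤ Real.log (T - t) - Real.log (T - T') := by
      refine le_trans hd ?_
      have h6 : (T' - t) / (T - t) = -((t - T') / (T - t)) := by ring
      linarith [hlog1, h6.le]
    have h7 : c / (2 * T) * (T' - t) = c / 2 * ((T' - t) / T) := by
      field_simp
    have h8 := mul_le_mul_of_nonneg_left hL (by linarith : (0:ℝ) ≤ c / 2)
    linarith
  -- combine
  have hP : (0:ℝ) < (R t) ^ (2*k) := pow_pos hRt _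
  have hMHpos : 0 < M - Stmt10Aux.HH T c t :=
    lt_of_lt_of_le (by positivity) h3
  have h9 : (R t) ^ (2*k) * (M - Stmt10Aux.HH T c t) ≤ K := by
    rw [mul_comm]
    exact (le_div_iff₀ hP).1 (by rw [div_eq_mul_inv]; exact h4)
  have h10 : (R t) ^ (2*k) ≤ K / (M - Stmt10Aux.HH T c t) := (le_div_iff₀ hMHpos).2 h9
  refine le_trans h10 ?_
  have h11 : K / (M - Stmt10Aux.HH T c t) ≤ K / (c / (2 * T) * (T' - t)) := by
    apply div_le_div_of_nonneg_left hK.le _ h3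
    positivity
  refine le_trans h11 (le_of_eq ?_)
  field_simp
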